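/- Let A be a binary, equireplicate r×c row-column design on v symbols with replication number e. (a) If r ≥ 2 and (2c − v)·(r − 1) = c·(e − 1) as an equation of integers, then every pair of distinct rows shares exactly 2c − v symbols, i.e. |R_i ∩ R_{i'}| = 2c − v for all i ≠ i' (property RR holds). (b) If c ≥ 2 and (2r − v)·(c − 1) = r·(e − 1) as an equation of integers, then every pair of distinct columns shares exactly 2r − v symbols, i.e. |C_j ∩ C_{j'}| = 2r − v for all j ≠ j' (property CC holds). -/
import Mathlib


open Finset

/-- A row-column design `A` is *binary* if each row map and each column map is injective. -/
def IsBinary {ρ γ σ : Type*} (A : ρ × γ → σ) : Prop :=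
  (∀ i : ρ, Function.Injective fun j : γ => A (i, j)) ∧
  (∀ j : γ, Function.Injective fun i : ρ => A (i, j))

/-- A row-column design `A` is *equireplicate* with replication number `e` if every
symbol occurs in exactly `e` cells. -/
def IsEquireplicate {ρ γ σ : Type*} [Fintype ρ] [Fintype γ] [DecidableEq σ]
    (A : ρ × γ → σ) (e : ℕ) : Prop :=
  ∀ x : σ, (Finset.univ.filter fun p : ρ × γ => A p = x).card = e

/-- The set of symbols occurring in row `i`. -/
def rowSet {ρ γ σ : Type*} [Fintype γ] [DecidableEq σ] (A : ρ × γ → σ) (i : ρ) : Finset σ :=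
  Finset.image (fun j : γ => A (i, j)) Finset.univ

/-- The set of symbols occurring in column `j`. -/
def colSet {ρ γ σ : Type*} [Fintype ρ] [DecidableEq σ] (A : ρ × γ → σ) (j : γ) : Finset σ :=
  Finset.image (fun i : ρ => A (i, j)) Finset.univ

/-- If every term is at least `m` and the sum is `m * card`, every term equals `m`. -/
lemma sum_rigid {α : Type*} (s : Finset α) (f : α → ℤ) (m : ℤ)
    (hle : ∀ a ∈ s, m ≤ f a) (hsum : ∑ a ∈ s, f a = m * s.card) :
    ∀ a ∈ s, f a = m := by
  by_contra h
  push_neg at h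
  obtain ⟨a, ha, hne⟩ := h
  have hlt : m < f a := lt_of_le_of_ne (hle a ha) (Ne.symm hne)
  have : ∑ _b ∈ s, m < ∑ b ∈ s, f b :=
    Finset.sum_lt_sum (fun b hb => hle b hb) ⟨a, ha, hlt⟩
  rw [Finset.sum_const, hsum, nsmul_eq_mul, mul_comm] at this
  exact lt_irrefl _ this

/-- Abstract row version of the statement. -/
lemma rowRR {ρ γ σ : Type*} [Fintype ρ] [Fintype γ] [Fintype σ]
    [DecidableEq ρ] [DecidableEq σ]
    (A : ρ × γ → σ) (e : ℕ)
    (hrow : ∀ i : ρ, Function.Injective fun j : γ => A (i, j))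
    (hrep : ∀ x : σ, (Finset.univ.filter fun p : ρ × γ => A p = x).card = e)
    (heq : (2 * (Fintype.card γ : ℤ) - Fintype.card σ) * ((Fintype.card ρ : ℤ) - 1)
        = (Fintype.card γ : ℤ) * ((e : ℤ) - 1)) :
    ∀ i i' : ρ, i ≠ i' →
      ((rowSet A i ∩ rowSet A i').card : ℤ)
        = 2 * (Fintype.card γ : ℤ) - Fintype.card σ := by
  intro i i' hne
  set c : ℕ := Fintype.card γ with hc
  set v : ℕ := Fintype.card σ with hv
  set r : ℕ := Fintype.card ρ with hr
  -- each row has exactly c symbols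
  have hRcard : ∀ k : ρ, (rowSet A k).card = c := by
    intro k
    rw [rowSet, Finset.card_image_of_injective _ (hrow k), Finset.card_univ]
  -- each symbol lies in exactly e rows
  have hrows : ∀ x : σ, (Finset.univ.filter fun k : ρ => x ∈ rowSet A k).card = e := by
    intro x
    have himg : Finset.image Prod.fst (Finset.univ.filter fun p : ρ × γ => A p = x)
        = Finset.univ.filter fun k : ρ => x ∈ rowSet A k := by
      ext k
      simp only [Finset.mem_image, Finset.mem_filter, Finset.mem_univ, true_and, rowSet]
      constructor
      · rintro ⟨⟨a, b⟩, hab, rfl⟩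
        exact ⟨b, hab⟩
      · rintro ⟨j, hj⟩
        exact ⟨(k, j), hj, rfl⟩
    rw [← hrep x, ← himg]
    apply Finset.card_image_of_injOn
    rintro ⟨a, b⟩ hab ⟨a', b'⟩ hab' h
    simp only [Finset.coe_filter, Set.mem_setOf_eq, Finset.mem_univ, true_and] at hab hab'
    cases h
    have : b = b' := hrow a (hab.trans hab'.symm)
    subst this; rfl
  -- lower bound for each intersection
  have hlow : ∀ k k' : ρ,
      (2 * (c : ℤ) - v) ≤ ((rowSet A k ∩ rowSet A k').card : ℤ) := by
    intro k k'
    have h1 := Finset.card_inter_add_card_union (rowSet A k) (rowSet A k')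
    have h2 : (rowSet A k ∪ rowSet A k').card ≤ v := by
      rw [hv]; exact Finset.card_le_univ _
    have := hRcard k
    have := hRcard k'
    omega
  -- sum of intersections over other rows
  have hsum : ∑ k ∈ Finset.univ.erase i, ((rowSet A i ∩ rowSet A k).card : ℤ)
      = (c : ℤ) * ((e : ℤ) - 1) := by
    have hterm : ∀ k : ρ, ((rowSet A i ∩ rowSet A k).card : ℤ)
        = ∑ x ∈ rowSet A i, (if x ∈ rowSet A k then (1 : ℤ) else 0) := by
      intro k
      rw [← Finset.filter_mem_eq_inter, Finset.card_filter]
      push_cast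
      rfl
    calc ∑ k ∈ Finset.univ.erase i, ((rowSet A i ∩ rowSet A k).card : ℤ)
        = ∑ k ∈ Finset.univ.erase i, ∑ x ∈ rowSet A i,
            (if x ∈ rowSet A k then (1 : ℤ) else 0) := by
          exact Finset.sum_congr rfl fun k _ => hterm k
      _ = ∑ x ∈ rowSet A i, ∑ k ∈ Finset.univ.erase i,
            (if x ∈ rowSet A k then (1 : ℤ) else 0) := Finset.sum_comm
      _ = ∑ x ∈ rowSet A i, ((e : ℤ) - 1) := by
          apply Finset.sum_congr rfl
          intro x hx
          have hsum2 : (∑ k ∈ Finset.univ.erase i,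
              (if x ∈ rowSet A k then (1 : ℤ) else 0))
              = (((Finset.univ.erase i).filter fun k : ρ => x ∈ rowSet A k).card : ℤ) := by
            rw [Finset.card_filter]
            push_cast
            rfl
          rw [hsum2]
          have hfe : (Finset.univ.erase i).filter (fun k : ρ => x ∈ rowSet A k)
              = (Finset.univ.filter fun k : ρ => x ∈ rowSet A k).erase i := by
            ext k
            simp only [Finset.mem_filter, Finset.mem_erase, Finset.mem_univ, true_and]
            tauto
          have hi : i ∈ Finset.univ.filter fun k : ρ => x ∈ rowSet A k := by
            simp only [Finset.mem_filter, Finset.mem_univ, true_and]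
            exact hx
          have he1 : 1 ≤ e := by
            rw [← hrows x]
            exact Finset.card_pos.mpr ⟨i, hi⟩
          rw [hfe, Finset.card_erase_of_mem hi, hrows x]
          push_cast [Nat.cast_sub he1]
          ring
      _ = (c : ℤ) * ((e : ℤ) - 1) := by
          rw [Finset.sum_const, hRcard i, nsmul_eq_mul]
  -- rigidity
  have hcard : ((Finset.univ.erase i).card : ℤ) = (r : ℤ) - 1 := by
    rw [Finset.card_erase_of_mem (Finset.mem_univ i), Finset.card_univ, ← hr]
    have : 1 ≤ r := by
      rw [hr]; exact Fintype.card_pos_iff.mpr ⟨i⟩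
    push_cast [Nat.cast_sub this]
    ring
  have := sum_rigid (Finset.univ.erase i)
    (fun k => ((rowSet A i ∩ rowSet A k).card : ℤ)) (2 * (c : ℤ) - v)
    (fun k _ => hlow i k)
    (by rw [hsum, hcard, ← heq])
  exact this i' (Finset.mem_erase.mpr ⟨hne.symm, Finset.mem_univ i'⟩)

theorem stmt3 (r c v e : ℕ)
    (A : Fin r × Fin c → Fin v) (hbin : IsBinary A) (hrep : IsEquireplicate A e) :
    (2 ≤ r →
      (2 * (c : ℤ) - v) * ((r : ℤ) - 1) = (c : ℤ) * ((e : ℤ) - 1) →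
      ∀ i i' : Fin r, i ≠ i' →
        ((rowSet A i ∩ rowSet A i').card : ℤ) = 2 * (c : ℤ) - v) ∧
    (2 ≤ c →
      (2 * (r : ℤ) - v) * ((c : ℤ) - 1) = (r : ℤ) * ((e : ℤ) - 1) →
      ∀ j j' : Fin c, j ≠ j' →
        ((colSet A j ∩ colSet A j').card : ℤ) = 2 * (r : ℤ) - v) := by
  constructor
  · intro _ heq i i' hne
    have h := rowRR A e hbin.1 hrep (by simpa using heq) i i' hne
    simpa using h
  · intro _ heq j j' hne
    set B : Fin c × Fin r → Fin v := fun p => A (p.2, p.1) with hB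
    have hrowB : ∀ j : Fin c, Function.Injective fun i : Fin r => B (j, i) :=
      fun j => hbin.2 j
    have hrepB : ∀ x : Fin v,
        (Finset.univ.filter fun p : Fin c × Fin r => B p = x).card = e := by
      intro x
      rw [← hrep x]
      apply Finset.card_bij (fun p _ => Prod.swap p)
      · rintro ⟨a, b⟩ hp
        simp only [Finset.mem_filter, Finset.mem_univ, true_and] at hp ⊢
        exact hp
      · exact fun _ _ _ _ h => Prod.swap_injective h
      · rintro ⟨a, b⟩ hq
        simp only [Finset.mem_filter, Finset.mem_univ, true_and] at hq
        exact ⟨(b, a), by simpa [hB] using hq, rfl⟩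
    have hcol : ∀ j : Fin c, colSet A j = rowSet B j := by
      intro j; rfl
    have h := rowRR B e hrowB hrepB (by simpa using heq) j j' hne
    rw [hcol j, hcol j']
    simpa using h
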